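/- arXiv:1609.02398 — 3 statements merged into one kernel-verified Lean document; each statement's English description precedes it below -/
import Mathlib

section
/- Let Q be an M×M complex unitary matrix, F a subset of {1,…,M} of size m, Q_F the corresponding M×m submatrix of columns of Q, W an M×M unitary matrix, and set P = W Q_F Q_F^H W^H. Let h be a random vector in ℂ^M with integrable second moments whose correlation matrix is E[h h^H] = Φ. Then E[‖P h − h‖²] = Σ_{ℓ ∉ F} [Q^H W^H Φ W Q]_{ℓℓ}, i.e., the estimator bias equals the sum of the diagonal entries of the bias matrix B̂ = Q^H W^H Φ W Q indexed by the complement of F. -/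
open Matrix MeasureTheory Finset

/-- Bias of the phase-modulated reduced-rank channel estimator: with `P = W QF QFᴴ Wᴴ`
and `E[h hᴴ] = Φ`, one has `E[‖P h − h‖²] = ∑_{ℓ ∉ F} [Qᴴ Wᴴ Φ W Q]ℓℓ`. -/
theorem bias_of_reduced_rank_estimator
    (M m : ℕ) (hM : 0 < M) (hm : m ≤ M)
    (Q : Matrix (Fin M) (Fin M) ℂ) (hQ : Qᴴ * Q = 1)
    (F : Finset (Fin M)) (hF : F.card = m)
    (QF : Matrix (Fin M) {ℓ : Fin M // ℓ ∈ F} ℂ)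
    (hQF : ∀ (i : Fin M) (j : {ℓ : Fin M // ℓ ∈ F}), QF i j = Q i j)
    (W : Matrix (Fin M) (Fin M) ℂ) (hW : Wᴴ * W = 1)
    (P : Matrix (Fin M) (Fin M) ℂ) (hP : P = W * QF * QFᴴ * Wᴴ)
    {Ω : Type*} [MeasurableSpace Ω] (μ : Measure Ω) [IsProbabilityMeasure μ]
    (h : Ω → (Fin M → ℂ))
    (hint : ∀ k l : Fin M,
      Integrable (fun ω => h ω k * (starRingEnd ℂ) (h ω l)) μ)
    (Φ : Matrix (Fin M) (Fin M) ℂ)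
    (hΦ : ∀ k l : Fin M, ∫ ω, h ω k * (starRingEnd ℂ) (h ω l) ∂μ = Φ k l) :
    ((∫ ω, ∑ i, ‖(P *ᵥ h ω - h ω) i‖ ^ 2 ∂μ : ℝ) : ℂ)
      = ∑ ℓ ∈ Fᶜ, (Qᴴ * Wᴴ * Φ * W * Q) ℓ ℓ := by
  classical
  have hQQ : Q * Qᴴ = 1 := mul_eq_one_comm.mp hQ
  have hWW : W * Wᴴ = 1 := mul_eq_one_comm.mp hW
  -- the columns of QF are orthonormal
  have hQFQF : QFᴴ * QF = 1 := by
    ext j j'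
    have hq := congrFun (congrFun hQ j.1) j'.1
    simp only [Matrix.mul_apply, conjTranspose_apply] at hq ⊢
    simp only [hQF, hq]
    by_cases hjj : j = j'
    · subst hjj; simp [Matrix.one_apply]
    · rw [Matrix.one_apply_ne (fun e => hjj (Subtype.ext e)), Matrix.one_apply_ne hjj]
  set A : Matrix (Fin M) (Fin M) ℂ := P - 1 with hA
  have hPH : Pᴴ = P := by
    rw [hP]
    simp [conjTranspose_mul, Matrix.mul_assoc]
  have hPP : P * P = P := by
    rw [hP]
    have e1 : W * QF * QFᴴ * Wᴴ * (W * QF * QFᴴ * Wᴴ)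
        = W * (QF * ((QFᴴ * (Wᴴ * W)) * (QF * (QFᴴ * Wᴴ)))) := by
      simp only [Matrix.mul_assoc]
    rw [e1, hW, Matrix.mul_one, ← Matrix.mul_assoc QFᴴ QF, hQFQF, Matrix.one_mul]
    simp only [Matrix.mul_assoc]
  have hAA : Aᴴ * A = 1 - P := by
    have hAH : Aᴴ = A := by rw [hA, conjTranspose_sub, hPH, conjTranspose_one]
    rw [hAH, hA]
    have e : (P - 1) * (P - 1) = P * P - P - P + 1 := by noncomm_ring
    rw [e, hPP]
    abel
  -- entrywise formula for the error vector
  have hv : ∀ ω : Ω, ∀ i, (P *ᵥ h ω - h ω) i = ∑ k, A i k * h ω k := by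
    intro ω i
    have : P *ᵥ h ω - h ω = A *ᵥ h ω := by rw [hA, sub_mulVec, one_mulVec]
    rw [this]
    simp [Matrix.mulVec, dotProduct]
  have hsq : ∀ ω : Ω, ∀ i, ((‖(P *ᵥ h ω - h ω) i‖ ^ 2 : ℝ) : ℂ)
      = ∑ k, ∑ l, (A i k * (starRingEnd ℂ) (A i l)) * (h ω k * (starRingEnd ℂ) (h ω l)) := by
    intro ω i
    have e1 : ((‖(P *ᵥ h ω - h ω) i‖ ^ 2 : ℝ) : ℂ)
        = (P *ᵥ h ω - h ω) i * (starRingEnd ℂ) ((P *ᵥ h ω - h ω) i) := by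
      rw [Complex.mul_conj']
      push_cast
      ring
    rw [e1, hv ω i, map_sum, Finset.sum_mul_sum]
    refine Finset.sum_congr rfl fun k _ => Finset.sum_congr rfl fun l _ => ?_
    rw [map_mul (starRingEnd ℂ)]
    ring
  -- compute the expectation
  have hexp : ((∫ ω, ∑ i, ‖(P *ᵥ h ω - h ω) i‖ ^ 2 ∂μ : ℝ) : ℂ)
      = ∑ i, ∑ k, ∑ l, (A i k * (starRingEnd ℂ) (A i l)) * Φ k l := by
    have e2 : ∀ ω : Ω, ((∑ i, ‖(P *ᵥ h ω - h ω) i‖ ^ 2 : ℝ) : ℂ)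
        = ∑ i, ∑ k, ∑ l, (A i k * (starRingEnd ℂ) (A i l)) * (h ω k * (starRingEnd ℂ) (h ω l)) := by
      intro ω
      rw [Complex.ofReal_sum]
      exact Finset.sum_congr rfl fun i _ => hsq ω i
    calc ((∫ ω, ∑ i, ‖(P *ᵥ h ω - h ω) i‖ ^ 2 ∂μ : ℝ) : ℂ)
        = ∫ ω, ((∑ i, ‖(P *ᵥ h ω - h ω) i‖ ^ 2 : ℝ) : ℂ) ∂μ := (integral_ofReal (𝕜 := ℂ)).symm
      _ = ∫ ω, ∑ i, ∑ k, ∑ l,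
            (A i k * (starRingEnd ℂ) (A i l)) * (h ω k * (starRingEnd ℂ) (h ω l)) ∂μ :=
          integral_congr_ae (Filter.Eventually.of_forall e2)
      _ = ∑ i, ∑ k, ∑ l, (A i k * (starRingEnd ℂ) (A i l)) * Φ k l := by
          rw [integral_finset_sum _ (fun i _ => integrable_finset_sum _ fun k _ =>
            integrable_finset_sum _ fun l _ => (hint k l).const_mul _)]
          refine Finset.sum_congr rfl fun i _ => ?_
          rw [integral_finset_sum _
            (fun k _ => integrable_finset_sum _ fun l _ => (hint k l).const_mul _)]
          refine Finset.sum_congr rfl fun k _ => ?_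
          rw [integral_finset_sum _ (fun l _ => (hint k l).const_mul _)]
          refine Finset.sum_congr rfl fun l _ => ?_
          rw [MeasureTheory.integral_const_mul, hΦ k l]
  rw [hexp]
  -- the triple sum is a trace
  have hLtr : (∑ i, ∑ k, ∑ l, (A i k * (starRingEnd ℂ) (A i l)) * Φ k l)
      = (A * Φ * Aᴴ).trace := by
    rw [Matrix.trace]
    refine Finset.sum_congr rfl fun i _ => ?_
    simp only [Matrix.diag_apply, Matrix.mul_apply, conjTranspose_apply, Finset.sum_mul]
    rw [Finset.sum_comm]
    refine Finset.sum_congr rfl fun k _ => Finset.sum_congr rfl fun l _ => ?_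
    exact mul_right_comm _ _ _
  rw [hLtr]
  have htrL : (A * Φ * Aᴴ).trace = Φ.trace - (P * Φ).trace := by
    rw [Matrix.trace_mul_comm (A * Φ) Aᴴ, ← Matrix.mul_assoc, hAA, sub_mul, Matrix.one_mul,
      trace_sub]
  rw [htrL]
  -- trace of the bias matrix B over everything is trace Φ
  have htr1 : (∑ ℓ, (Qᴴ * Wᴴ * Φ * W * Q) ℓ ℓ) = Φ.trace := by
    have e1 : Qᴴ * Wᴴ * Φ * W * Q = (Qᴴ * Wᴴ * Φ * W) * Q := by
      simp only [Matrix.mul_assoc]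
    have : (Qᴴ * Wᴴ * Φ * W * Q).trace = Φ.trace := by
      rw [e1, Matrix.trace_mul_comm (Qᴴ * Wᴴ * Φ * W) Q]
      have e2 : Q * (Qᴴ * Wᴴ * Φ * W) = (Q * Qᴴ) * (Wᴴ * Φ * W) := by
        simp only [Matrix.mul_assoc]
      rw [e2, hQQ, Matrix.one_mul, Matrix.trace_mul_comm (Wᴴ * Φ) W]
      have e3 : W * (Wᴴ * Φ) = (W * Wᴴ) * Φ := by simp only [Matrix.mul_assoc]
      rw [e3, hWW, Matrix.one_mul]
    simpa [Matrix.trace] using this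
  -- the partial sum over F is trace (P * Φ)
  have htr3 : (∑ ℓ ∈ F, (Qᴴ * Wᴴ * Φ * W * Q) ℓ ℓ) = (P * Φ).trace := by
    have h1 : P * Φ = (W * QF) * ((QFᴴ * Wᴴ) * Φ) := by
      rw [hP]; simp only [Matrix.mul_assoc]
    rw [h1, Matrix.trace_mul_comm]
    have h2 : (QFᴴ * Wᴴ) * Φ * (W * QF) = QFᴴ * (Wᴴ * Φ * W) * QF := by
      simp only [Matrix.mul_assoc]
    have h3 : ∀ j : {ℓ : Fin M // ℓ ∈ F},
        (QFᴴ * (Wᴴ * Φ * W) * QF).diag j = (Qᴴ * Wᴴ * Φ * W * Q) j.1 j.1 := by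
      intro j
      have e4 : (Qᴴ * Wᴴ * Φ * W * Q) j.1 j.1 = (Qᴴ * (Wᴴ * Φ * W) * Q) j.1 j.1 := by
        congr 1
        simp only [Matrix.mul_assoc]
      rw [e4]
      simp [Matrix.diag_apply, Matrix.mul_apply, conjTranspose_apply, hQF]
    rw [h2, Matrix.trace, ← Finset.sum_coe_sort F (fun ℓ => (Qᴴ * Wᴴ * Φ * W * Q) ℓ ℓ)]
    exact Finset.sum_congr rfl fun j _ => (h3 j).symm
  have hsplit : (∑ ℓ ∈ Fᶜ, (Qᴴ * Wᴴ * Φ * W * Q) ℓ ℓ)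
      = (∑ ℓ, (Qᴴ * Wᴴ * Φ * W * Q) ℓ ℓ) - ∑ ℓ ∈ F, (Qᴴ * Wᴴ * Φ * W * Q) ℓ ℓ := by
    rw [eq_sub_iff_add_eq, Finset.sum_compl_add_sum]
  rw [hsplit, htr1, htr3]
end

section
/- Let M, m, T be positive integers with m ≤ M. Let Q be an M×M complex unitary matrix, F ⊆ {1,…,M} with |F| = m, Q_F the M×m submatrix of columns of Q indexed by F, W an M×M unitary matrix, and P = W Q_F Q_F^H W^H. Let p ∈ ℂ^T be nonzero, β > 0, and γ = √β · ‖p‖². Let h (a random vector in ℂ^M with E[h h^H] = Φ) and N (a random M×T complex matrix with mean zero and E[N_{k i} · conj(N_{l j})] = δ_{kl} δ_{ij}) be independent, all second moments being integrable. Define ĥ_m = (1/γ) P (γ h + N p). Then the mean square error satisfies E[‖ĥ_m − h‖²] = m/(β‖p‖²) + Σ_{ℓ ∉ F} [Q^H W^H Φ W Q]_{ℓℓ}, i.e., MSE(ĥ_m) = Var{ĥ_m} + b(ĥ_m) with Var{ĥ_m} = m/(β‖p‖²) and b(ĥ_m) = Σ_{ℓ ∉ F} [B̂]_{ℓℓ}.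 -/
open Matrix MeasureTheory ProbabilityTheory Finset

set_option maxHeartbeats 1000000 in
lemma aux_main_mse {M : ℕ} (P : Matrix (Fin M) (Fin M) ℂ) (hPH : Pᴴ = P) (hPP : P * P = P)
    (γ : ℂ) (hγ0 : γ ≠ 0) (x y : Fin M → ℂ) :
    ∑ i, (γ⁻¹ • (P *ᵥ (γ • x + y)) - x) i * (starRingEnd ℂ) ((γ⁻¹ • (P *ᵥ (γ • x + y)) - x) i)
      = star x ⬝ᵥ ((1 - P) *ᵥ x)
        + (γ⁻¹ * (starRingEnd ℂ) γ⁻¹) * (star y ⬝ᵥ (P *ᵥ y)) := by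
  obtain ⟨u, hu⟩ : ∃ u : Fin M → ℂ, u = P *ᵥ x - x := ⟨_, rfl⟩
  obtain ⟨v, hv⟩ : ∃ v : Fin M → ℂ, v = P *ᵥ y := ⟨_, rfl⟩
  have hd : γ⁻¹ • (P *ᵥ (γ • x + y)) - x = u + γ⁻¹ • v := by
    rw [hu, hv]
    simp [Matrix.mulVec_add, Matrix.mulVec_smul, smul_add, smul_smul,
      inv_mul_cancel₀ hγ0]
    abel
  have hPu : Pᴴ *ᵥ u = 0 := by
    rw [hPH, hu]
    simp [Matrix.mulVec_sub, Matrix.mulVec_mulVec, hPP]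
  have hPv : Pᴴ *ᵥ v = P *ᵥ y := by
    rw [hPH, hv]; simp [Matrix.mulVec_mulVec, hPP]
  have h1 : u ⬝ᵥ star v = 0 := by
    calc u ⬝ᵥ star v = star v ⬝ᵥ u := dotProduct_comm _ _
      _ = (star y ᵥ* Pᴴ) ⬝ᵥ u := by rw [hv, star_mulVec]
      _ = star y ⬝ᵥ (Pᴴ *ᵥ u) := (dotProduct_mulVec _ _ _).symm
      _ = 0 := by rw [hPu, dotProduct_zero]
  have h2 : v ⬝ᵥ star u = 0 := by
    calc v ⬝ᵥ star u = star u ⬝ᵥ v := dotProduct_comm _ _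
      _ = (star x ᵥ* Pᴴ - star x) ⬝ᵥ v := by rw [hu, star_sub, star_mulVec]
      _ = (star x ᵥ* Pᴴ) ⬝ᵥ v - star x ⬝ᵥ v := sub_dotProduct _ _ _
      _ = star x ⬝ᵥ (Pᴴ *ᵥ v) - star x ⬝ᵥ v := by rw [dotProduct_mulVec]
      _ = 0 := by rw [hPv, hv, sub_self]
  have h3 : u ⬝ᵥ star u = star x ⬝ᵥ ((1 - P) *ᵥ x) := by
    calc u ⬝ᵥ star u = star u ⬝ᵥ u := dotProduct_comm _ _
      _ = (star x ᵥ* Pᴴ - star x) ⬝ᵥ u := by rw [hu, star_sub, star_mulVec]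
      _ = (star x ᵥ* Pᴴ) ⬝ᵥ u - star x ⬝ᵥ u := sub_dotProduct _ _ _
      _ = star x ⬝ᵥ (Pᴴ *ᵥ u) - star x ⬝ᵥ u := by rw [dotProduct_mulVec]
      _ = star x ⬝ᵥ ((1 - P) *ᵥ x) := by
          rw [hPu, dotProduct_zero, hu]
          simp [Matrix.sub_mulVec, Matrix.one_mulVec, dotProduct_sub]
  have h4 : v ⬝ᵥ star v = star y ⬝ᵥ (P *ᵥ y) := by
    calc v ⬝ᵥ star v = star v ⬝ᵥ v := dotProduct_comm _ _
      _ = (star y ᵥ* Pᴴ) ⬝ᵥ v := by rw [hv, star_mulVec]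
      _ = star y ⬝ᵥ (Pᴴ *ᵥ v) := (dotProduct_mulVec _ _ _).symm
      _ = star y ⬝ᵥ (P *ᵥ y) := by rw [hPv]
  have hsum : ∀ d : Fin M → ℂ, ∑ i, d i * (starRingEnd ℂ) (d i) = d ⬝ᵥ star d := by
    intro d; simp only [dotProduct, Pi.star_apply, starRingEnd_apply]
  calc ∑ i, (γ⁻¹ • (P *ᵥ (γ • x + y)) - x) i * (starRingEnd ℂ) ((γ⁻¹ • (P *ᵥ (γ • x + y)) - x) i)
      = (γ⁻¹ • (P *ᵥ (γ • x + y)) - x) ⬝ᵥ star (γ⁻¹ • (P *ᵥ (γ • x + y)) - x) := hsum _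
    _ = (u + γ⁻¹ • v) ⬝ᵥ star (u + γ⁻¹ • v) := by rw [hd]
    _ = star x ⬝ᵥ ((1 - P) *ᵥ x)
        + (γ⁻¹ * (starRingEnd ℂ) γ⁻¹) * (star y ⬝ᵥ (P *ᵥ y)) := by
        rw [star_add, star_smul, add_dotProduct, dotProduct_add, dotProduct_add,
          smul_dotProduct, dotProduct_smul, dotProduct_smul, smul_dotProduct,
          h1, h2, h3, h4]
        simp only [smul_eq_mul, starRingEnd_apply, mul_zero, add_zero, zero_add]
        ring

lemma aux_expand1_mse {M : ℕ} (A : Matrix (Fin M) (Fin M) ℂ) (x : Fin M → ℂ) :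
    star x ⬝ᵥ (A *ᵥ x)
      = ∑ q : Fin M × Fin M, A q.1 q.2 * (x q.2 * (starRingEnd ℂ) (x q.1)) := by
  rw [Fintype.sum_prod_type]
  simp only [dotProduct, mulVec, Pi.star_apply, starRingEnd_apply, Finset.mul_sum]
  exact Finset.sum_congr rfl fun l _ => Finset.sum_congr rfl fun k _ => by ring

lemma aux_expand2_mse {M T : ℕ} (P : Matrix (Fin M) (Fin M) ℂ) (p : Fin T → ℂ)
    (Nm : Matrix (Fin M) (Fin T) ℂ) :
    star (Nm *ᵥ p) ⬝ᵥ (P *ᵥ (Nm *ᵥ p))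
      = ∑ q : (Fin M × Fin T) × (Fin M × Fin T),
          ((starRingEnd ℂ) (p q.1.2) * p q.2.2 * P q.1.1 q.2.1)
            * (Nm q.2.1 q.2.2 * (starRingEnd ℂ) (Nm q.1.1 q.1.2)) := by
  calc star (Nm *ᵥ p) ⬝ᵥ (P *ᵥ (Nm *ᵥ p))
      = ∑ l, (∑ j', star (Nm l j' * p j')) * (∑ k, P l k * ∑ j, Nm k j * p j) := by
        simp only [dotProduct, mulVec, Pi.star_apply, star_sum]
    _ = ∑ l, ∑ j', ∑ k, ∑ j, star (Nm l j' * p j') * (P l k * (Nm k j * p j)) := by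
        refine Finset.sum_congr rfl fun l _ => ?_
        rw [Finset.sum_mul_sum]
        refine Finset.sum_congr rfl fun j' _ => ?_
        exact Finset.sum_congr rfl fun k _ => by rw [Finset.mul_sum, Finset.mul_sum]
    _ = _ := by
        simp only [Fintype.sum_prod_type]
        refine Finset.sum_congr rfl fun l _ => Finset.sum_congr rfl fun j' _ =>
          Finset.sum_congr rfl fun k _ => Finset.sum_congr rfl fun j _ => ?_
        simp only [star_mul', starRingEnd_apply]
        ring

set_option maxHeartbeats 1000000 in
/-- Mean square error decomposition of the rank-`m` phase-modulated reduced-rank channel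
estimator `ĥ_m = (1/γ) P (γ h + N p)`:
`MSE(ĥ_m) = m/(β‖p‖²) + ∑_{ℓ ∉ F} [Qᴴ Wᴴ Φ W Q]ℓℓ`. -/
theorem mse_of_reduced_rank_estimator
    (M m T : ℕ) (hM : 0 < M) (hm : m ≤ M) (hT : 0 < T)
    (Q : Matrix (Fin M) (Fin M) ℂ) (hQ : Qᴴ * Q = 1)
    (F : Finset (Fin M)) (hF : F.card = m)
    (QF : Matrix (Fin M) {ℓ : Fin M // ℓ ∈ F} ℂ)
    (hQF : ∀ (i : Fin M) (j : {ℓ : Fin M // ℓ ∈ F}), QF i j = Q i j)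
    (W : Matrix (Fin M) (Fin M) ℂ) (hW : Wᴴ * W = 1)
    (P : Matrix (Fin M) (Fin M) ℂ) (hP : P = W * QF * QFᴴ * Wᴴ)
    (p : Fin T → ℂ) (hp : p ≠ 0)
    (β : ℝ) (hβ : 0 < β)
    (γ : ℂ) (hγ : γ = ((Real.sqrt β * ∑ j, ‖p j‖ ^ 2 : ℝ) : ℂ))
    {Ω : Type*} [MeasurableSpace Ω] (μ : Measure Ω) [IsProbabilityMeasure μ]
    (h : Ω → (Fin M → ℂ)) (N : Ω → Matrix (Fin M) (Fin T) ℂ)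
    -- independence of the channel vector and the noise matrix
    (hindep : IndepFun h (fun ω => fun (k : Fin M) (i : Fin T) => N ω k i) μ)
    -- integrable second moments
    (hinth : ∀ k l : Fin M,
      Integrable (fun ω => h ω k * (starRingEnd ℂ) (h ω l)) μ)
    (hintN : ∀ (k l : Fin M) (i j : Fin T),
      Integrable (fun ω => N ω k i * (starRingEnd ℂ) (N ω l j)) μ)
    (hintmix : ∀ (k l : Fin M) (i : Fin T),
      Integrable (fun ω => h ω k * (starRingEnd ℂ) (N ω l i)) μ)
    -- channel correlation matrix
    (Φ : Matrix (Fin M) (Fin M) ℂ)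
    (hΦ : ∀ k l : Fin M, ∫ ω, h ω k * (starRingEnd ℂ) (h ω l) ∂μ = Φ k l)
    -- zero-mean, white, unit-variance noise
    (hNmean : ∀ (k : Fin M) (i : Fin T), ∫ ω, N ω k i ∂μ = 0)
    (hNcorr : ∀ (k l : Fin M) (i j : Fin T),
      ∫ ω, N ω k i * (starRingEnd ℂ) (N ω l j) ∂μ
        = if (k, i) = (l, j) then 1 else 0)
    -- the rank-m reduced-rank estimator
    (hhat : Ω → (Fin M → ℂ))
    (hhat_def : ∀ ω, hhat ω = γ⁻¹ • (P *ᵥ (γ • h ω + N ω *ᵥ p))) :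
    ((∫ ω, ∑ i, ‖(hhat ω - h ω) i‖ ^ 2 ∂μ : ℝ) : ℂ)
      = ((m / (β * ∑ j, ‖p j‖ ^ 2) : ℝ) : ℂ)
        + ∑ ℓ ∈ Fᶜ, (Qᴴ * Wᴴ * Φ * W * Q) ℓ ℓ := by
  classical
  -- scalar facts
  have hs0 : 0 < ∑ j, ‖p j‖ ^ 2 := by
    obtain ⟨j0, hj0⟩ : ∃ j, p j ≠ 0 := by
      by_contra hcon; push_neg at hcon; exact hp (funext hcon)
    have h1 : 0 < ‖p j0‖ ^ 2 := pow_pos (norm_pos_iff.mpr hj0) 2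
    exact lt_of_lt_of_le h1 (Finset.single_le_sum
      (f := fun j => ‖p j‖ ^ 2) (fun j _ => by positivity) (Finset.mem_univ j0))
  have hγr : (0:ℝ) < Real.sqrt β * ∑ j, ‖p j‖ ^ 2 :=
    mul_pos (Real.sqrt_pos.mpr hβ) hs0
  have hγ0 : γ ≠ 0 := by
    rw [hγ]; exact_mod_cast Complex.ofReal_ne_zero.mpr hγr.ne'
  -- matrix facts
  have hQQ : Q * Qᴴ = 1 := mul_eq_one_comm.mp hQ
  have hWWH : W * Wᴴ = 1 := mul_eq_one_comm.mp hW
  have hQFQF : QFᴴ * QF = 1 := by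
    ext a b
    have h1 : (Qᴴ * Q) (a : Fin M) (b : Fin M)
        = (1 : Matrix (Fin M) (Fin M) ℂ) (a : Fin M) (b : Fin M) := by rw [hQ]
    simp only [Matrix.mul_apply, Matrix.conjTranspose_apply, hQF] at h1 ⊢
    rw [h1]
    rw [Matrix.one_apply, Matrix.one_apply]
    exact if_congr Subtype.ext_iff.symm rfl rfl
  have hPH : Pᴴ = P := by
    rw [hP]
    simp [Matrix.conjTranspose_mul, Matrix.mul_assoc]
  have hPP : P * P = P := by
    rw [hP]
    simp only [Matrix.mul_assoc]
    rw [show Wᴴ * (W * (QF * (QFᴴ * Wᴴ))) = QF * (QFᴴ * Wᴴ) from by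
      rw [← Matrix.mul_assoc, hW, Matrix.one_mul]]
    rw [show QFᴴ * (QF * (QFᴴ * Wᴴ)) = QFᴴ * Wᴴ from by
      rw [← Matrix.mul_assoc, hQFQF, Matrix.one_mul]]
  -- traces
  have htrP : Matrix.trace P = (m : ℂ) := by
    rw [hP, show W * QF * QFᴴ * Wᴴ = (W * QF) * (QFᴴ * Wᴴ) from by
      simp [Matrix.mul_assoc]]
    rw [Matrix.trace_mul_comm]
    rw [show QFᴴ * Wᴴ * (W * QF) = QFᴴ * ((Wᴴ * W) * QF) from by
      simp [Matrix.mul_assoc]]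
    rw [hW, Matrix.one_mul, hQFQF, Matrix.trace_one]
    norm_num [Fintype.card_coe, hF]
  have hsand : ∀ X : Matrix (Fin M) (Fin M) ℂ,
      Matrix.trace (QFᴴ * X * QF) = ∑ ℓ ∈ F, (Qᴴ * X * Q) ℓ ℓ := by
    intro X
    rw [← Finset.sum_coe_sort F (fun ℓ => (Qᴴ * X * Q) ℓ ℓ), Matrix.trace]
    refine Finset.sum_congr rfl fun a _ => ?_
    simp [Matrix.mul_apply, Matrix.conjTranspose_apply, hQF, Matrix.diag_apply]
  have htrPΦ : Matrix.trace (P * Φ) = ∑ ℓ ∈ F, (Qᴴ * Wᴴ * Φ * W * Q) ℓ ℓ := by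
    rw [hP, show W * QF * QFᴴ * Wᴴ * Φ = (W * QF) * (QFᴴ * (Wᴴ * Φ)) from by
      simp [Matrix.mul_assoc]]
    rw [Matrix.trace_mul_comm]
    rw [show QFᴴ * (Wᴴ * Φ) * (W * QF) = QFᴴ * (Wᴴ * Φ * W) * QF from by
      simp [Matrix.mul_assoc]]
    rw [hsand (Wᴴ * Φ * W)]
    refine Finset.sum_congr rfl fun ℓ _ => ?_
    rw [show Qᴴ * (Wᴴ * Φ * W) * Q = Qᴴ * Wᴴ * Φ * W * Q from by simp [Matrix.mul_assoc]]
  have htrB : Matrix.trace (Qᴴ * Wᴴ * Φ * W * Q) = Matrix.trace Φ := by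
    rw [show Qᴴ * Wᴴ * Φ * W * Q = Qᴴ * (Wᴴ * Φ * W * Q) from by simp [Matrix.mul_assoc]]
    rw [Matrix.trace_mul_comm]
    rw [show Wᴴ * Φ * W * Q * Qᴴ = Wᴴ * (Φ * W * (Q * Qᴴ)) from by simp [Matrix.mul_assoc]]
    rw [hQQ, Matrix.mul_one, Matrix.trace_mul_comm]
    rw [show Φ * W * Wᴴ = Φ * (W * Wᴴ) from by simp [Matrix.mul_assoc]]
    rw [hWWH, Matrix.mul_one]
  -- the two integral computations
  have hI1 : ∫ ω, ∑ q : Fin M × Fin M,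
        (1 - P) q.1 q.2 * (h ω q.2 * (starRingEnd ℂ) (h ω q.1)) ∂μ
      = Matrix.trace ((1 - P) * Φ) := by
    rw [integral_finset_sum _ (fun q _ => (hinth q.2 q.1).const_mul _)]
    simp only [integral_const_mul, hΦ]
    rw [Fintype.sum_prod_type, Matrix.trace]
    simp only [Matrix.diag_apply, Matrix.mul_apply]
  have hI2 : ∫ ω, ∑ q : (Fin M × Fin T) × (Fin M × Fin T),
        ((starRingEnd ℂ) (p q.1.2) * p q.2.2 * P q.1.1 q.2.1)
          * (N ω q.2.1 q.2.2 * (starRingEnd ℂ) (N ω q.1.1 q.1.2)) ∂μ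
      = Matrix.trace P * ((∑ j, ‖p j‖ ^ 2 : ℝ) : ℂ) := by
    rw [integral_finset_sum _ (fun q _ => (hintN q.2.1 q.1.1 q.2.2 q.1.2).const_mul _)]
    simp only [integral_const_mul, hNcorr]
    rw [Fintype.sum_prod_type]
    have hstep : ∀ x : Fin M × Fin T,
        (∑ y : Fin M × Fin T, (starRingEnd ℂ) (p x.2) * p y.2 * P x.1 y.1
            * (if (y.1, y.2) = (x.1, x.2) then (1:ℂ) else 0))
          = (starRingEnd ℂ) (p x.2) * p x.2 * P x.1 x.1 := by
      intro x
      rw [Finset.sum_eq_single x]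
      · simp
      · intro y _ hyx
        simp only [Prod.mk.eta]
        rw [if_neg hyx, mul_zero]
      · intro hx; exact absurd (Finset.mem_univ x) hx
    calc (∑ x : Fin M × Fin T, ∑ y : Fin M × Fin T,
            (starRingEnd ℂ) (p x.2) * p y.2 * P x.1 y.1
              * (if (y.1, y.2) = (x.1, x.2) then (1:ℂ) else 0))
        = ∑ x : Fin M × Fin T, (starRingEnd ℂ) (p x.2) * p x.2 * P x.1 x.1 :=
          Finset.sum_congr rfl fun x _ => hstep x
      _ = ∑ l, ∑ j, (starRingEnd ℂ) (p j) * p j * P l l := by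
          rw [Fintype.sum_prod_type]
      _ = Matrix.trace P * ((∑ j, ‖p j‖ ^ 2 : ℝ) : ℂ) := by
          have hps : ((∑ j, ‖p j‖ ^ 2 : ℝ) : ℂ) = ∑ j, (starRingEnd ℂ) (p j) * p j := by
            push_cast
            refine Finset.sum_congr rfl fun j _ => ?_
            rw [← Complex.normSq_eq_conj_mul_self]
            norm_cast
            rw [Complex.normSq_eq_norm_sq]
          rw [hps, Matrix.trace, Finset.sum_mul]
          refine Finset.sum_congr rfl fun l _ => ?_
          rw [Finset.mul_sum]
          exact Finset.sum_congr rfl fun j _ => by simp [Matrix.diag_apply]; ring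
  -- integrability
  have hint1 : Integrable (fun ω => ∑ q : Fin M × Fin M,
      (1 - P) q.1 q.2 * (h ω q.2 * (starRingEnd ℂ) (h ω q.1))) μ :=
    integrable_finset_sum _ (fun q _ => (hinth q.2 q.1).const_mul _)
  have hint2 : Integrable (fun ω => ∑ q : (Fin M × Fin T) × (Fin M × Fin T),
      ((starRingEnd ℂ) (p q.1.2) * p q.2.2 * P q.1.1 q.2.1)
        * (N ω q.2.1 q.2.2 * (starRingEnd ℂ) (N ω q.1.1 q.1.2))) μ :=
    integrable_finset_sum _ (fun q _ => (hintN q.2.1 q.1.1 q.2.2 q.1.2).const_mul _)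
  -- pointwise identity
  have hpoint : ∀ ω, ((∑ i, ‖(hhat ω - h ω) i‖ ^ 2 : ℝ) : ℂ)
      = (∑ q : Fin M × Fin M,
            (1 - P) q.1 q.2 * (h ω q.2 * (starRingEnd ℂ) (h ω q.1)))
        + (γ⁻¹ * (starRingEnd ℂ) γ⁻¹)
          * ∑ q : (Fin M × Fin T) × (Fin M × Fin T),
              ((starRingEnd ℂ) (p q.1.2) * p q.2.2 * P q.1.1 q.2.1)
                * (N ω q.2.1 q.2.2 * (starRingEnd ℂ) (N ω q.1.1 q.1.2)) := by
    intro ω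
    have hd : hhat ω - h ω = γ⁻¹ • (P *ᵥ (γ • h ω + N ω *ᵥ p)) - h ω := by
      rw [hhat_def]
    calc ((∑ i, ‖(hhat ω - h ω) i‖ ^ 2 : ℝ) : ℂ)
        = ∑ i, (hhat ω - h ω) i * (starRingEnd ℂ) ((hhat ω - h ω) i) := by
          push_cast
          refine Finset.sum_congr rfl fun i _ => ?_
          rw [Complex.mul_conj]
          norm_cast
          rw [Complex.normSq_eq_norm_sq]
      _ = star (h ω) ⬝ᵥ ((1 - P) *ᵥ h ω)
            + (γ⁻¹ * (starRingEnd ℂ) γ⁻¹) * (star (N ω *ᵥ p) ⬝ᵥ (P *ᵥ (N ω *ᵥ p))) := by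
          rw [hd]
          exact aux_main_mse P hPH hPP γ hγ0 (h ω) (N ω *ᵥ p)
      _ = _ := by rw [aux_expand1_mse, aux_expand2_mse]
  -- final scalar identity
  have hvar : (γ⁻¹ * (starRingEnd ℂ) γ⁻¹) * ((m : ℂ) * ((∑ j, ‖p j‖ ^ 2 : ℝ) : ℂ))
      = ((m / (β * ∑ j, ‖p j‖ ^ 2) : ℝ) : ℂ) := by
    have hss : Real.sqrt β * Real.sqrt β = β := Real.mul_self_sqrt hβ.le
    have h1 : Real.sqrt β ≠ 0 := by positivity
    have hreal : (Real.sqrt β * ∑ j, ‖p j‖ ^ 2)⁻¹ * (Real.sqrt β * ∑ j, ‖p j‖ ^ 2)⁻¹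
        * ((m : ℝ) * ∑ j, ‖p j‖ ^ 2) = (m : ℝ) / (β * ∑ j, ‖p j‖ ^ 2) := by
      have hs0' : (∑ j, ‖p j‖ ^ 2) ≠ 0 := hs0.ne'
      have hprod : (Real.sqrt β * ∑ j, ‖p j‖ ^ 2) * (Real.sqrt β * ∑ j, ‖p j‖ ^ 2)
          = β * ((∑ j, ‖p j‖ ^ 2) * ∑ j, ‖p j‖ ^ 2) := by
        linear_combination (∑ j, ‖p j‖ ^ 2) * (∑ j, ‖p j‖ ^ 2) * hss
      rw [← mul_inv, hprod]
      have hβ0 : β ≠ 0 := hβ.ne'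
      have hne : β * ((∑ j, ‖p j‖ ^ 2) * ∑ j, ‖p j‖ ^ 2) ≠ 0 :=
        mul_ne_zero hβ0 (mul_ne_zero hs0' hs0')
      rw [eq_div_iff (mul_ne_zero hβ0 hs0')]
      calc (β * ((∑ j, ‖p j‖ ^ 2) * ∑ j, ‖p j‖ ^ 2))⁻¹ * ((m : ℝ) * ∑ j, ‖p j‖ ^ 2)
              * (β * ∑ j, ‖p j‖ ^ 2)
          = (β * ((∑ j, ‖p j‖ ^ 2) * ∑ j, ‖p j‖ ^ 2))⁻¹
              * (β * ((∑ j, ‖p j‖ ^ 2) * ∑ j, ‖p j‖ ^ 2)) * (m : ℝ) := by ring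
        _ = (m : ℝ) := by rw [inv_mul_cancel₀ hne, one_mul]
    rw [hγ, ← Complex.ofReal_inv, Complex.conj_ofReal]
    exact_mod_cast congrArg (fun t : ℝ => (t : ℂ)) hreal
  -- bias identity
  have hbias : Matrix.trace ((1 - P) * Φ) = ∑ ℓ ∈ Fᶜ, (Qᴴ * Wᴴ * Φ * W * Q) ℓ ℓ := by
    rw [Matrix.sub_mul, Matrix.one_mul, Matrix.trace_sub, htrPΦ, ← htrB, Matrix.trace]
    simp only [Matrix.diag_apply]
    linear_combination (-1 : ℂ) * (Finset.sum_add_sum_compl F fun ℓ => (Qᴴ * Wᴴ * Φ * W * Q) ℓ ℓ)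
  -- put everything together
  have hcast : ((∫ ω, ∑ i, ‖(hhat ω - h ω) i‖ ^ 2 ∂μ : ℝ) : ℂ)
      = ∫ ω, ((∑ i, ‖(hhat ω - h ω) i‖ ^ 2 : ℝ) : ℂ) ∂μ := integral_ofReal.symm
  rw [hcast]
  simp only [hpoint]
  rw [integral_add hint1 (hint2.const_mul _), integral_const_mul, hI1, hI2, htrP,
    hbias, hvar]
  ring
end

section
/- Fix a positive integer M, a positive real T, and nonnegative reals b₁, …, b_M. For α > 0, a set F ⊆ {1,…,M}, and m = |F|, define f_α(m, F) = m/(T·α) + Σ_{ℓ ∉ F} b_ℓ. Let 0 < α₁ < α₂ and suppose the pair (m₁, F₁) (with |F₁| = m₁) minimizes f_{α₁} over all pairs (m, F) with F ⊆ {1,…,M} and |F| = m, and (m₂, F₂) (with |F₂| = m₂) minimizes f_{α₂} over the same collection. Then m₁ ≤ m₂. -/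
open Finset

/-- The MSE-minimizing modeling order is nondecreasing in the SNR: if `(m₁, F₁)` minimizes
`f_{α₁}(m, F) = m/(Tα₁) + ∑_{ℓ∉F} b_ℓ` and `(m₂, F₂)` minimizes `f_{α₂}` with
`0 < α₁ < α₂`, then `m₁ ≤ m₂`. -/
theorem optimal_order_monotone_in_snr
    (M : ℕ) (hM : 0 < M) (T : ℝ) (hT : 0 < T)
    (b : Fin M → ℝ) (hb : ∀ ℓ, 0 ≤ b ℓ)
    (f : ℝ → Finset (Fin M) → ℝ)
    (hf : ∀ (α : ℝ) (F : Finset (Fin M)),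
      f α F = (F.card : ℝ) / (T * α) + ∑ ℓ ∈ Fᶜ, b ℓ)
    (α₁ α₂ : ℝ) (h0 : 0 < α₁) (h12 : α₁ < α₂)
    (F₁ F₂ : Finset (Fin M)) (m₁ m₂ : ℕ)
    (hm₁ : m₁ = F₁.card) (hm₂ : m₂ = F₂.card)
    (hmin₁ : ∀ F : Finset (Fin M), f α₁ F₁ ≤ f α₁ F)
    (hmin₂ : ∀ F : Finset (Fin M), f α₂ F₂ ≤ f α₂ F) :
    m₁ ≤ m₂ := by
  by_contra h
  push_neg at h
  have h1 := hmin₁ F₂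
  have h2 := hmin₂ F₁
  rw [hf, hf] at h1 h2
  rw [← hm₁, ← hm₂] at h1 h2
  have hα₂ : 0 < α₂ := h0.trans h12
  have hTα₁ : 0 < T * α₁ := mul_pos hT h0
  have hTα₂ : 0 < T * α₂ := mul_pos hT hα₂
  have hm : (m₂ : ℝ) < m₁ := by exact_mod_cast h
  have key : (1 : ℝ) / (T * α₂) < 1 / (T * α₁) := by
    apply one_div_lt_one_div_of_lt hTα₁
    exact mul_lt_mul_of_pos_left h12 hT
  simp only [div_eq_mul_inv, one_div] at h1 h2 key
  nlinarith [mul_lt_mul_of_pos_left key (sub_pos.mpr hm)]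
end
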